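/- Let T be a Kock-Zöberlein monad on the category of posets (T a 2-functor with T e_X ≤ e_{T X} for all X). Then a monotone map h : T X → X is an Eilenberg–Moore algebra structure (h ∘ e_X = id and h ∘ T h = h ∘ m_X) if and only if h ∘ e_X = id; and in that case h is left adjoint to e_X. -/

import Mathlib

open CategoryTheory

/-- Application of a morphism of `PartOrd` to an element. -/
def PartOrd.ap {X Y : PartOrd} (f : X ⟶ Y) : X → Y := (show ↑X →o ↑Y from f.hom)

lemma PartOrd.ap_mono {X Y : PartOrd} (f : X ⟶ Y) : Monotone (PartOrd.ap f) :=
  (show ↑X →o ↑Y from f.hom).monotone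

lemma PartOrd.ap_comp {X Y Z : PartOrd} (f : X ⟶ Y) (g : Y ⟶ Z) (x : X) :
    PartOrd.ap (f ≫ g) x = PartOrd.ap g (PartOrd.ap f x) := rfl

lemma PartOrd.ap_id {X : PartOrd} (x : X) : PartOrd.ap (𝟙 X) x = x := rfl

lemma PartOrd.ap_congr {X Y : PartOrd} {f g : X ⟶ Y} (e : f = g) (x : X) :
    PartOrd.ap f x = PartOrd.ap g x := by rw [e]

open PartOrd in
/-- Key lemma: if `k` splits the unit, then `id ≤ η ∘ k`. -/
lemma kz_unit_le (T : Monad PartOrd)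
    (h2 : ∀ {X Y : PartOrd} (f g : X ⟶ Y), (∀ x, ap f x ≤ ap g x) →
      ∀ a, ap (T.map f) a ≤ ap (T.map g) a)
    (hKZ : ∀ (X : PartOrd) (a : T.obj X),
      ap (T.map (T.η.app X)) a ≤ ap (T.η.app (T.obj X)) a)
    (Y : PartOrd) (k : T.obj Y ⟶ Y) (hk : T.η.app Y ≫ k = 𝟙 Y)
    (a : T.obj Y) : a ≤ ap (T.η.app Y) (ap k a) := by
  have h1 : ap (T.map k) (ap (T.map (T.η.app Y)) a) = a := by
    rw [← ap_comp, ← T.map_comp, hk]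
    simp [ap_id]
  have h3 : ap (T.map k) (ap (T.map (T.η.app Y)) a)
      ≤ ap (T.map k) (ap (T.η.app (T.obj Y)) a) :=
    ap_mono (T.map k) (hKZ Y a)
  have h4 : ap (T.map k) (ap (T.η.app (T.obj Y)) a) = ap (T.η.app Y) (ap k a) := by
    rw [← ap_comp, ← ap_comp]
    exact ap_congr (T.η.naturality k).symm a
  calc a = ap (T.map k) (ap (T.map (T.η.app Y)) a) := h1.symm
    _ ≤ ap (T.map k) (ap (T.η.app (T.obj Y)) a) := h3
    _ = ap (T.η.app Y) (ap k a) := h4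

open PartOrd in
/-- For a Kock–Zöberlein monad `T` on posets, a monotone map `h : T X → X` is an
Eilenberg–Moore algebra structure iff `h ∘ e_X = id`; and in that case `h ⊣ e_X`. -/
theorem stmt8 (T : Monad PartOrd)
    (h2 : ∀ {X Y : PartOrd} (f g : X ⟶ Y), (∀ x, ap f x ≤ ap g x) →
      ∀ a, ap (T.map f) a ≤ ap (T.map g) a)
    (hKZ : ∀ (X : PartOrd) (a : T.obj X),
      ap (T.map (T.η.app X)) a ≤ ap (T.η.app (T.obj X)) a)
    (X : PartOrd) (h : T.obj X ⟶ X) :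
    ((T.η.app X ≫ h = 𝟙 X ∧ T.map h ≫ h = T.μ.app X ≫ h) ↔ T.η.app X ≫ h = 𝟙 X) ∧
    (T.η.app X ≫ h = 𝟙 X →
      ∀ (a : T.obj X) (x : X), ap h a ≤ x ↔ a ≤ ap (T.η.app X) x) := by
  -- auxiliary facts under the assumption `he : T.η.app X ≫ h = 𝟙 X`
  have key : ∀ (he : T.η.app X ≫ h = 𝟙 X) (a : T.obj X),
      a ≤ ap (T.η.app X) (ap h a) := fun he => kz_unit_le T @h2 hKZ X h he
  have hηh : ∀ (he : T.η.app X ≫ h = 𝟙 X) (x : X), ap h (ap (T.η.app X) x) = x := by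
    intro he x
    rw [← ap_comp, he]
    rfl
  constructor
  · constructor
    · exact fun ⟨he, _⟩ => he
    · intro he
      refine ⟨he, ?_⟩
      apply PartOrd.hom_ext
      apply OrderHom.ext
      funext b
      have hb1 : ap (T.map h ≫ h) b = ap h (ap (T.map h) b) := rfl
      have hb2 : ap (T.μ.app X ≫ h) b = ap h (ap (T.μ.app X) b) := rfl
      show ap (T.map h ≫ h) b = ap (T.μ.app X ≫ h) b
      rw [hb1, hb2]
      apply le_antisymm
      · -- h (T h b) ≤ h (μ b)
        have hμ : b ≤ ap (T.η.app (T.obj X)) (ap (T.μ.app X) b) :=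
          kz_unit_le T @h2 hKZ (T.obj X) (T.μ.app X) (T.left_unit X) b
        have := ap_mono (T.map h) hμ
        have hnat : ap (T.map h) (ap (T.η.app (T.obj X)) (ap (T.μ.app X) b))
            = ap (T.η.app X) (ap h (ap (T.μ.app X) b)) := by
          rw [← ap_comp, ← ap_comp]
          exact ap_congr (T.η.naturality h).symm _
        have h5 : ap (T.map h) b ≤ ap (T.η.app X) (ap h (ap (T.μ.app X) b)) :=
          le_of_le_of_eq this hnat
        have h6 := ap_mono h h5
        rwa [hηh he] at h6
      · -- h (μ b) ≤ h (T h b)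
        have hle : ∀ a, ap (𝟙 (T.obj X)) a ≤ ap (h ≫ T.η.app X) a := by
          intro a
          rw [ap_id, ap_comp]
          exact key he a
        have h7 := h2 (𝟙 (T.obj X)) (h ≫ T.η.app X) hle b
        rw [T.map_id, ap_id, T.map_comp, ap_comp] at h7
        have h8 : b ≤ ap (T.η.app (T.obj X)) (ap (T.map h) b) :=
          le_trans h7 (hKZ X (ap (T.map h) b))
        have h9 := ap_mono (T.μ.app X) h8
        have h10 : ap (T.μ.app X) (ap (T.η.app (T.obj X)) (ap (T.map h) b))
            = ap (T.map h) b := by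
          rw [← ap_comp, T.left_unit, ap_id]
        rw [h10] at h9
        exact ap_mono h h9
  · intro he a x
    constructor
    · intro hax
      exact le_trans (key he a) (ap_mono (T.η.app X) hax)
    · intro hax
      have := ap_mono h hax
      rwa [hηh he x] at this
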